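/- arXiv:2108.07446 — 5 statements merged into one kernel-verified Lean document; each statement's English description precedes it below -/
import Mathlib

section
/- For any finite simple undirected graph G on N nodes, the sum over edges e of |A_e|^2 is bounded above and below by constant multiples of the sum over nodes i of |G_i|^3, where G_i is the set of edges incident to node i and A_e = G_{e^+} ∪ G_{e^-} for an edge e = (e^+, e^-). In particular, ∑_{e∈G} |A_e|^2 ≍ ∑_{i=1}^N |G_i|^3. -/
open Finset SimpleGraph

/-- `Ae G e`: the set of edges of `G` sharing at least one node with the edge `e`
(this is `G_{e⁺} ∪ G_{e⁻}`, and it contains `e` itself). -/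
def Ae {N : ℕ} (G : SimpleGraph (Fin N)) [DecidableRel G.Adj] (e : Sym2 (Fin N)) :
    Finset (Sym2 (Fin N)) :=
  G.edgeFinset.filter fun f => ∃ v, v ∈ e ∧ v ∈ f

lemma sum_pair_mem {N : ℕ} {u v : Fin N} (h : u ≠ v) (f : Fin N → ℝ) :
    ∑ i : Fin N, (if i ∈ s(u,v) then f i else 0) = f u + f v := by
  classical
  rw [← Finset.sum_filter]
  have hf : Finset.univ.filter (fun i => i ∈ s(u,v)) = {u, v} := by
    ext i; simp [Sym2.mem_iff]
  rw [hf, Finset.sum_insert (by simp [h]), Finset.sum_singleton]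

lemma incidence_subset_Ae {N : ℕ} (G : SimpleGraph (Fin N)) [DecidableRel G.Adj]
    {u : Fin N} {e : Sym2 (Fin N)} (hu : u ∈ e) :
    G.incidenceFinset u ⊆ Ae G e := by
  intro f hf
  rw [G.mem_incidenceFinset] at hf
  obtain ⟨hfe, hue⟩ := hf
  exact Finset.mem_filter.mpr ⟨mem_edgeFinset.mpr hfe, u, hu, hue⟩

lemma Ae_subset_union {N : ℕ} (G : SimpleGraph (Fin N)) [DecidableRel G.Adj]
    (u v : Fin N) :
    Ae G s(u,v) ⊆ G.incidenceFinset u ∪ G.incidenceFinset v := by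
  intro f hf
  obtain ⟨hfe, w, hwe, hwf⟩ := Finset.mem_filter.mp hf
  rw [Sym2.mem_iff] at hwe
  rcases hwe with rfl | rfl
  · exact Finset.mem_union_left _ ((G.mem_incidenceFinset _ _).mpr ⟨mem_edgeFinset.mp hfe, hwf⟩)
  · exact Finset.mem_union_right _ ((G.mem_incidenceFinset _ _).mpr ⟨mem_edgeFinset.mp hfe, hwf⟩)

/-- there are universal constants `0 < c ≤ C` such that for every finite
simple graph, `c ∑_i |G_i|³ ≤ ∑_{e∈G} |A_e|² ≤ C ∑_i |G_i|³`. -/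
theorem sum_Ae_sq_asymp_sum_deg_cube :
    ∃ c C : ℝ, 0 < c ∧ c ≤ C ∧
      ∀ (N : ℕ) (G : SimpleGraph (Fin N)) [DecidableRel G.Adj],
        c * ∑ i : Fin N, (G.degree i : ℝ) ^ 3 ≤
            ∑ e ∈ G.edgeFinset, ((Ae G e).card : ℝ) ^ 2 ∧
        ∑ e ∈ G.edgeFinset, ((Ae G e).card : ℝ) ^ 2 ≤
            C * ∑ i : Fin N, (G.degree i : ℝ) ^ 3 := by
  classical
  refine ⟨1/4, 2, by norm_num, by norm_num, fun N G _ => ?_⟩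
  set D : Sym2 (Fin N) → ℝ :=
    fun e => ∑ i : Fin N, if i ∈ e then (G.degree i : ℝ)^2 else 0 with hDdef
  -- key identity
  have hD : ∑ e ∈ G.edgeFinset, D e = ∑ i : Fin N, (G.degree i : ℝ)^3 := by
    rw [hDdef]
    rw [Finset.sum_comm]
    refine Finset.sum_congr rfl fun i _ => ?_
    rw [← Finset.sum_filter]
    have hfilt : G.edgeFinset.filter (fun e => i ∈ e) = G.incidenceFinset i := by
      ext f
      simp [mem_incidenceFinset, SimpleGraph.incidenceSet, Finset.mem_filter,
        mem_edgeFinset, and_comm]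
    rw [hfilt, Finset.sum_const, G.card_incidenceFinset_eq_degree]
    ring
  -- per-edge bounds
  have hbounds : ∀ e ∈ G.edgeFinset,
      (1/4) * D e ≤ ((Ae G e).card : ℝ)^2 ∧ ((Ae G e).card : ℝ)^2 ≤ 2 * D e := by
    intro e he
    induction e using Sym2.ind with
    | _ u v =>
      have hadj : G.Adj u v := mem_edgeFinset.mp he
      have hne : u ≠ v := hadj.ne
      have hDe : D s(u,v) = (G.degree u : ℝ)^2 + (G.degree v : ℝ)^2 := by
        rw [hDdef]; exact sum_pair_mem hne _
      have hu : G.degree u ≤ (Ae G s(u,v)).card := by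
        rw [← G.card_incidenceFinset_eq_degree]
        exact Finset.card_le_card (incidence_subset_Ae G (by simp))
      have hv : G.degree v ≤ (Ae G s(u,v)).card := by
        rw [← G.card_incidenceFinset_eq_degree]
        exact Finset.card_le_card (incidence_subset_Ae G (by simp))
      have hup : (Ae G s(u,v)).card ≤ G.degree u + G.degree v := by
        calc (Ae G s(u,v)).card
            ≤ (G.incidenceFinset u ∪ G.incidenceFinset v).card :=
              Finset.card_le_card (Ae_subset_union G u v)
          _ ≤ (G.incidenceFinset u).card + (G.incidenceFinset v).card :=
              Finset.card_union_le _ _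
          _ = G.degree u + G.degree v := by
              rw [G.card_incidenceFinset_eq_degree, G.card_incidenceFinset_eq_degree]
      have hu' : (G.degree u : ℝ) ≤ ((Ae G s(u,v)).card : ℝ) := by exact_mod_cast hu
      have hv' : (G.degree v : ℝ) ≤ ((Ae G s(u,v)).card : ℝ) := by exact_mod_cast hv
      have hup' : ((Ae G s(u,v)).card : ℝ) ≤ (G.degree u : ℝ) + (G.degree v : ℝ) := by
        exact_mod_cast hup
      have hdu : (0:ℝ) ≤ (G.degree u : ℝ) := Nat.cast_nonneg _
      have hdv : (0:ℝ) ≤ (G.degree v : ℝ) := Nat.cast_nonneg _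
      constructor
      · rw [hDe]; nlinarith [sq_nonneg (((Ae G s(u,v)).card : ℝ))]
      · rw [hDe]; nlinarith [sq_nonneg ((G.degree u : ℝ) - (G.degree v : ℝ)), Nat.cast_nonneg (α := ℝ) (Ae G s(u,v)).card]
  constructor
  · calc (1/4) * ∑ i : Fin N, (G.degree i : ℝ)^3
        = ∑ e ∈ G.edgeFinset, (1/4) * D e := by rw [← hD, Finset.mul_sum]
      _ ≤ ∑ e ∈ G.edgeFinset, ((Ae G e).card : ℝ)^2 :=
          Finset.sum_le_sum fun e he => (hbounds e he).1
  · calc ∑ e ∈ G.edgeFinset, ((Ae G e).card : ℝ)^2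
        ≤ ∑ e ∈ G.edgeFinset, 2 * D e :=
          Finset.sum_le_sum fun e he => (hbounds e he).2
      _ = 2 * ∑ i : Fin N, (G.degree i : ℝ)^3 := by rw [← hD, Finset.mul_sum]
end

section
/- For any finite simple undirected graph G on N nodes, ∑_{i=1}^N ∑_{j,k ∈ node_{G_i}, j≠k} d̃_j d̃_k ≤ C ( ∑_{i=1}^N |G_{i,2}|^2 + (|G|^2/N^2) ∑_{i=1}^N |G_i|^2 ) for a universal constant C, where d̃_i = |G_i| − 2|G|/N is the centered degree. -/
open Finset SimpleGraph

/-- `Gi2 G i`: the set of edges of `G` with at least one endpoint in the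
neighborhood `node_{G_i}` of node `i`. -/
def Gi2 {N : ℕ} (G : SimpleGraph (Fin N)) [DecidableRel G.Adj] (i : Fin N) :
    Finset (Sym2 (Fin N)) :=
  G.edgeFinset.filter fun f => ∃ v : Fin N, v ∈ f ∧ G.Adj i v

/-- `ctrDeg G i`: the centered degree `d̃_i = |G_i| - 2|G|/N`. -/
noncomputable def ctrDeg {N : ℕ} (G : SimpleGraph (Fin N)) [DecidableRel G.Adj]
    (i : Fin N) : ℝ :=
  (G.degree i : ℝ) - 2 * (G.edgeFinset.card : ℝ) / N

lemma key {N : ℕ} (G : SimpleGraph (Fin N)) [DecidableRel G.Adj] (i : Fin N) :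
    (∑ j ∈ G.neighborFinset i, G.degree j) ≤ 2 * (Gi2 G i).card := by
  have hsub : ∀ j ∈ G.neighborFinset i, G.incidenceFinset j ⊆ Gi2 G i := by
    intro j hj e he
    rw [SimpleGraph.mem_incidenceFinset] at he
    exact Finset.mem_filter.2 ⟨SimpleGraph.mem_edgeFinset.2 he.1, j, he.2,
      (G.mem_neighborFinset i j).1 hj⟩
  calc ∑ j ∈ G.neighborFinset i, G.degree j
      = ∑ j ∈ G.neighborFinset i, ∑ e ∈ Gi2 G i,
          if e ∈ G.incidenceFinset j then 1 else 0 := by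
        refine Finset.sum_congr rfl fun j hj => ?_
        rw [← Finset.card_filter, Finset.filter_mem_eq_inter,
          Finset.inter_eq_right.2 (hsub j hj), G.card_incidenceFinset_eq_degree]
    _ = ∑ e ∈ Gi2 G i, ∑ j ∈ G.neighborFinset i,
          if e ∈ G.incidenceFinset j then 1 else 0 := Finset.sum_comm
    _ ≤ ∑ _e ∈ Gi2 G i, 2 := by
        refine Finset.sum_le_sum fun e he => ?_
        rw [← Finset.card_filter]
        revert he
        refine Sym2.inductionOn e ?_
        intro a b _
        have hss : (G.neighborFinset i).filter
            (fun j => s(a, b) ∈ G.incidenceFinset j) ⊆ {a, b} := by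
          intro j hj
          have := (Finset.mem_filter.1 hj).2
          rw [SimpleGraph.mem_incidenceFinset, SimpleGraph.incidenceSet] at this
          have hm : j ∈ s(a, b) := this.2
          simp only [Sym2.mem_iff] at hm
          simp [hm]
        calc _ ≤ ({a, b} : Finset (Fin N)).card := Finset.card_le_card hss
          _ ≤ 2 := Finset.card_insert_le _ _ |>.trans (by simp)
    _ = 2 * (Gi2 G i).card := by rw [Finset.sum_const, smul_eq_mul, mul_comm]

/-- there is a universal constant `C > 0` such that for every finite simple
graph on `N` nodes,
`∑_i ∑_{j,k ∈ node_{G_i}, j≠k} d̃_j d̃_k ≤ C (∑_i |G_{i,2}|² + (|G|²/N²) ∑_i |G_i|²)`. -/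
theorem sum_ctrDeg_pairs_le :
    ∃ C : ℝ, 0 < C ∧
      ∀ (N : ℕ) (G : SimpleGraph (Fin N)) [DecidableRel G.Adj],
        (∑ i : Fin N, ∑ j ∈ G.neighborFinset i, ∑ k ∈ G.neighborFinset i \ {j},
            ctrDeg G j * ctrDeg G k) ≤
          C * (∑ i : Fin N, ((Gi2 G i).card : ℝ) ^ 2 +
            ((G.edgeFinset.card : ℝ) ^ 2 / (N : ℝ) ^ 2) *
              ∑ i : Fin N, (G.degree i : ℝ) ^ 2) := by
  refine ⟨4, by norm_num, ?_⟩
  intro N G _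
  have hstep : ∀ i : Fin N,
      (∑ j ∈ G.neighborFinset i, ∑ k ∈ G.neighborFinset i \ {j},
          ctrDeg G j * ctrDeg G k)
        ≤ 4 * ((Gi2 G i).card : ℝ) ^ 2
          + 4 * ((G.edgeFinset.card : ℝ) ^ 2 / (N : ℝ) ^ 2 * (G.degree i : ℝ) ^ 2) := by
    intro i
    set s := G.neighborFinset i with hs
    set S := ∑ j ∈ s, ctrDeg G j with hS
    have h1 : (∑ j ∈ s, ∑ k ∈ s \ {j}, ctrDeg G j * ctrDeg G k) ≤ S ^ 2 := by
      have heq : ∀ j ∈ s, (∑ k ∈ s \ {j}, ctrDeg G j * ctrDeg G k)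
          = ctrDeg G j * S - ctrDeg G j ^ 2 := by
        intro j hj
        rw [← Finset.mul_sum,
          Finset.sum_sdiff_eq_sub (Finset.singleton_subset_iff.2 hj),
          Finset.sum_singleton, mul_sub, ← hS]
        ring
      rw [Finset.sum_congr rfl heq, Finset.sum_sub_distrib, ← Finset.sum_mul, ← hS]
      have : (0:ℝ) ≤ ∑ j ∈ s, ctrDeg G j ^ 2 :=
        Finset.sum_nonneg fun j _ => sq_nonneg _
      nlinarith [sq_nonneg S]
    have hT : S = (∑ j ∈ s, (G.degree j : ℝ))
        - (G.degree i : ℝ) * (2 * (G.edgeFinset.card : ℝ) / N) := by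
      rw [hS]
      simp only [ctrDeg, Finset.sum_sub_distrib, Finset.sum_const, nsmul_eq_mul]
      rw [hs, G.card_neighborFinset_eq_degree]
    have hTle : (∑ j ∈ s, (G.degree j : ℝ)) ≤ 2 * ((Gi2 G i).card : ℝ) := by
      have := key G i
      push_cast [← Nat.cast_sum]
      exact_mod_cast this
    have hTnn : (0:ℝ) ≤ ∑ j ∈ s, (G.degree j : ℝ) :=
      Finset.sum_nonneg fun j _ => by positivity
    have hBnn : (0:ℝ) ≤ (G.degree i : ℝ) * (2 * (G.edgeFinset.card : ℝ) / N) := by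
      positivity
    have hS2 : S ^ 2 ≤ 4 * ((Gi2 G i).card : ℝ) ^ 2
        + ((G.degree i : ℝ) * (2 * (G.edgeFinset.card : ℝ) / N)) ^ 2 := by
      rw [hT]
      nlinarith [hTle, hTnn, hBnn, sq_nonneg ((∑ j ∈ s, (G.degree j : ℝ))
        - (G.degree i : ℝ) * (2 * (G.edgeFinset.card : ℝ) / N))]
    refine h1.trans (hS2.trans ?_)
    have : ((G.degree i : ℝ) * (2 * (G.edgeFinset.card : ℝ) / N)) ^ 2
        = 4 * ((G.edgeFinset.card : ℝ) ^ 2 / (N : ℝ) ^ 2 * (G.degree i : ℝ) ^ 2) := by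
      ring
    rw [this]
  calc (∑ i : Fin N, ∑ j ∈ G.neighborFinset i, ∑ k ∈ G.neighborFinset i \ {j},
          ctrDeg G j * ctrDeg G k)
      ≤ ∑ i : Fin N, (4 * ((Gi2 G i).card : ℝ) ^ 2
          + 4 * ((G.edgeFinset.card : ℝ) ^ 2 / (N : ℝ) ^ 2 * (G.degree i : ℝ) ^ 2)) :=
        Finset.sum_le_sum fun i _ => hstep i
    _ = 4 * (∑ i : Fin N, ((Gi2 G i).card : ℝ) ^ 2 +
          ((G.edgeFinset.card : ℝ) ^ 2 / (N : ℝ) ^ 2) *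
            ∑ i : Fin N, (G.degree i : ℝ) ^ 2) := by
        simp only [Finset.sum_add_distrib, ← Finset.mul_sum]
        ring
end

section
/- For any finite simple undirected graph G on N nodes, the quantity ∑_{e∈G} |A_e||B_e| is bounded above and below by constant multiples of ∑_{i=1}^N |G_i|^2 |G_{i,2}| + ∑_{i=1}^N |G_{i,2}|^2. -/
open Finset SimpleGraph

/-- `Be G e`: the set of edges of `G` with at least one endpoint in the neighborhood of
an endpoint of `e` (this is `B_e = G_{e⁺,2} ∪ G_{e⁻,2}`). -/
def Be {N : ℕ} (G : SimpleGraph (Fin N)) [DecidableRel G.Adj] (e : Sym2 (Fin N)) :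
    Finset (Sym2 (Fin N)) :=
  G.edgeFinset.filter fun f => ∃ v w : Fin N, v ∈ e ∧ G.Adj v w ∧ w ∈ f

section Aux

variable {N : ℕ} (G : SimpleGraph (Fin N)) [DecidableRel G.Adj]

lemma Gi2_eq (i : Fin N) :
    Gi2 G i = (G.neighborFinset i).biUnion (fun j => G.incidenceFinset j) := by
  ext f
  simp only [Gi2, mem_filter, mem_biUnion, mem_neighborFinset, mem_incidenceFinset,
    SimpleGraph.incidenceSet, Set.mem_setOf_eq, mem_edgeFinset, Set.mem_sep_iff]
  tauto

lemma g_le_D (i : Fin N) :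
    (Gi2 G i).card ≤ ∑ j ∈ G.neighborFinset i, G.degree j := by
  rw [Gi2_eq]
  refine (Finset.card_biUnion_le).trans ?_
  exact Finset.sum_le_sum fun j _ => le_of_eq (G.card_incidenceFinset_eq_degree j)

lemma D_le_two_g (i : Fin N) :
    ∑ j ∈ G.neighborFinset i, G.degree j ≤ 2 * (Gi2 G i).card := by
  have h1 : ∀ j ∈ G.neighborFinset i,
      G.degree j = ((Gi2 G i).filter (fun f => j ∈ f)).card := by
    intro j hj
    rw [← G.card_incidenceFinset_eq_degree j]
    congr 1
    ext f
    simp only [mem_incidenceFinset, SimpleGraph.incidenceSet, Set.mem_sep_iff,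
      mem_filter, Gi2, mem_edgeFinset]
    rw [mem_neighborFinset] at hj
    constructor
    · rintro ⟨hf, hjf⟩
      exact ⟨⟨hf, j, hjf, hj⟩, hjf⟩
    · rintro ⟨⟨hf, _⟩, hjf⟩
      exact ⟨hf, hjf⟩
  rw [Finset.sum_congr rfl h1]
  have h2 : ∑ j ∈ G.neighborFinset i, ((Gi2 G i).filter (fun f => j ∈ f)).card
      = ∑ f ∈ Gi2 G i, ((G.neighborFinset i).filter (fun j => j ∈ f)).card := by
    simp only [Finset.card_filter]
    rw [Finset.sum_comm]
  rw [h2]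
  calc ∑ f ∈ Gi2 G i, ((G.neighborFinset i).filter (fun j => j ∈ f)).card
      ≤ ∑ f ∈ Gi2 G i, 2 := by
        refine Finset.sum_le_sum fun f _ => ?_
        induction f using Sym2.ind with
        | _ x y =>
          refine le_trans (Finset.card_le_card (fun j hj => ?_) :
              _ ≤ ({x, y} : Finset (Fin N)).card) ?_
          · simp only [mem_filter, Sym2.mem_iff] at hj
            simp [hj.2]
          · exact (Finset.card_insert_le x {y}).trans (by simp)
    _ = 2 * (Gi2 G i).card := by rw [Finset.sum_const, smul_eq_mul, mul_comm]

lemma Ae_eq (a b : Fin N) :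
    Ae G s(a, b) = G.incidenceFinset a ∪ G.incidenceFinset b := by
  ext f
  simp only [Ae, mem_filter, mem_union, mem_incidenceFinset, SimpleGraph.incidenceSet,
    Set.mem_sep_iff, mem_edgeFinset, Sym2.mem_iff]
  constructor
  · rintro ⟨hf, v, (rfl | rfl), hv⟩
    · exact Or.inl ⟨hf, hv⟩
    · exact Or.inr ⟨hf, hv⟩
  · rintro (⟨hf, ha⟩ | ⟨hf, hb⟩)
    · exact ⟨hf, a, Or.inl rfl, ha⟩
    · exact ⟨hf, b, Or.inr rfl, hb⟩

lemma Be_eq (a b : Fin N) :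
    Be G s(a, b) = Gi2 G a ∪ Gi2 G b := by
  ext f
  simp only [Be, Gi2, mem_filter, mem_union, Sym2.mem_iff]
  constructor
  · rintro ⟨hf, v, w, (rfl | rfl), hadj, hw⟩
    · exact Or.inl ⟨hf, w, hw, hadj⟩
    · exact Or.inr ⟨hf, w, hw, hadj⟩
  · rintro (⟨hf, w, hw, hadj⟩ | ⟨hf, w, hw, hadj⟩)
    · exact ⟨hf, a, w, Or.inl rfl, hadj, hw⟩
    · exact ⟨hf, b, w, Or.inr rfl, hadj, hw⟩

lemma sum_pairs (f : Fin N → Fin N → ℝ) :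
    ∑ a, ∑ b ∈ G.neighborFinset a, f a b =
      ∑ e ∈ G.edgeFinset,
        ∑ p ∈ (univ : Finset (Fin N × Fin N)).filter
            (fun p => G.Adj p.1 p.2 ∧ Sym2.mk p.1 p.2 = e), f p.1 p.2 := by
  have hL : ∑ a, ∑ b ∈ G.neighborFinset a, f a b
      = ∑ p ∈ (univ : Finset (Fin N × Fin N)).filter (fun p => G.Adj p.1 p.2),
          f p.1 p.2 := by
    rw [Finset.sum_filter, Fintype.sum_prod_type]
    refine Finset.sum_congr rfl fun a _ => ?_
    rw [neighborFinset_eq_filter, Finset.sum_filter]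
  rw [hL]
  rw [← Finset.sum_fiberwise_of_maps_to (g := fun p => Sym2.mk p.1 p.2)
    (fun p hp => by
      simp only [mem_filter, mem_univ, true_and] at hp
      exact mem_edgeFinset.2 hp)]
  simp only [Finset.filter_filter]

lemma fiber_eval (f : Fin N → Fin N → ℝ) {a b : Fin N} (hab : G.Adj a b) :
    ∑ p ∈ (univ : Finset (Fin N × Fin N)).filter
        (fun p => G.Adj p.1 p.2 ∧ Sym2.mk p.1 p.2 = s(a, b)), f p.1 p.2
      = f a b + f b a := by
  have hfib : (univ : Finset (Fin N × Fin N)).filter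
      (fun p => G.Adj p.1 p.2 ∧ Sym2.mk p.1 p.2 = s(a, b)) = {(a, b), (b, a)} := by
    ext ⟨x, y⟩
    simp only [mem_filter, mem_univ, true_and, mem_insert, mem_singleton,
      Prod.mk.injEq, Sym2.eq_iff]
    constructor
    · rintro ⟨_, (⟨rfl, rfl⟩ | ⟨rfl, rfl⟩)⟩
      · exact Or.inl ⟨rfl, rfl⟩
      · exact Or.inr ⟨rfl, rfl⟩
    · rintro (⟨rfl, rfl⟩ | ⟨rfl, rfl⟩)
      · exact ⟨hab, Or.inl ⟨rfl, rfl⟩⟩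
      · exact ⟨hab.symm, Or.inr ⟨rfl, rfl⟩⟩
  rw [hfib]
  rw [Finset.sum_insert (by simp [Prod.ext_iff, hab.ne]), Finset.sum_singleton]

end Aux

set_option maxHeartbeats 2000000 in
/-- there are universal constants `0 < c ≤ C` such that for every finite
simple graph, `∑_{e∈G} |A_e||B_e| ≍ ∑_i |G_i|² |G_{i,2}| + ∑_i |G_{i,2}|²`. -/
theorem sum_AeBe_asymp :
    ∃ c C : ℝ, 0 < c ∧ c ≤ C ∧
      ∀ (N : ℕ) (G : SimpleGraph (Fin N)) [DecidableRel G.Adj],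
        c * (∑ i : Fin N, (G.degree i : ℝ) ^ 2 * ((Gi2 G i).card : ℝ) +
              ∑ i : Fin N, ((Gi2 G i).card : ℝ) ^ 2) ≤
            ∑ e ∈ G.edgeFinset, ((Ae G e).card : ℝ) * ((Be G e).card : ℝ) ∧
        ∑ e ∈ G.edgeFinset, ((Ae G e).card : ℝ) * ((Be G e).card : ℝ) ≤
            C * (∑ i : Fin N, (G.degree i : ℝ) ^ 2 * ((Gi2 G i).card : ℝ) +
              ∑ i : Fin N, ((Gi2 G i).card : ℝ) ^ 2) := by
  refine ⟨1/4, 2, by norm_num, by norm_num, ?_⟩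
  intro N G _
  -- abbreviations
  -- the intermediate quantity T
  set T : ℝ := ∑ e ∈ G.edgeFinset,
      ∑ p ∈ (univ : Finset (Fin N × Fin N)).filter
          (fun p => G.Adj p.1 p.2 ∧ Sym2.mk p.1 p.2 = e), (fun a b : Fin N => (G.degree a : ℝ) * ((Gi2 G a).card : ℝ) + (G.degree b : ℝ) * ((Gi2 G a).card : ℝ)) p.1 p.2 with hTdef
  -- evaluation of the per-edge term of T
  have hTe : ∀ {a b : Fin N}, G.Adj a b →
      ∑ p ∈ (univ : Finset (Fin N × Fin N)).filter
          (fun p => G.Adj p.1 p.2 ∧ Sym2.mk p.1 p.2 = s(a, b)), (fun a b : Fin N => (G.degree a : ℝ) * ((Gi2 G a).card : ℝ) + (G.degree b : ℝ) * ((Gi2 G a).card : ℝ)) p.1 p.2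
        = ((G.degree a : ℝ) + (G.degree b : ℝ)) * (((Gi2 G a).card : ℝ) + ((Gi2 G b).card : ℝ)) := by
    intro a b hab
    rw [fiber_eval G (fun a b : Fin N => (G.degree a : ℝ) * ((Gi2 G a).card : ℝ) + (G.degree b : ℝ) * ((Gi2 G a).card : ℝ)) hab]
    ring
  -- pointwise bounds on |A_e| and |B_e|
  have hAe_ub : ∀ {a b : Fin N}, G.Adj a b →
      ((Ae G s(a, b)).card : ℝ) ≤ (G.degree a : ℝ) + (G.degree b : ℝ) := by
    intro a b _
    have : (Ae G s(a, b)).card ≤ G.degree a + G.degree b := by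
      rw [Ae_eq]
      refine (Finset.card_union_le _ _).trans (le_of_eq ?_)
      rw [G.card_incidenceFinset_eq_degree, G.card_incidenceFinset_eq_degree]
    exact_mod_cast this
  have hBe_ub : ∀ {a b : Fin N}, G.Adj a b →
      ((Be G s(a, b)).card : ℝ) ≤ ((Gi2 G a).card : ℝ) + ((Gi2 G b).card : ℝ) := by
    intro a b _
    have : (Be G s(a, b)).card ≤ (Gi2 G a).card + (Gi2 G b).card := by
      rw [Be_eq]; exact Finset.card_union_le _ _
    exact_mod_cast this
  have hAe_lb : ∀ {a b : Fin N}, G.Adj a b →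
      (G.degree a : ℝ) + (G.degree b : ℝ) ≤ 2 * ((Ae G s(a, b)).card : ℝ) := by
    intro a b _
    have ha : G.degree a ≤ (Ae G s(a, b)).card := by
      rw [← G.card_incidenceFinset_eq_degree a, Ae_eq]
      exact Finset.card_le_card (Finset.subset_union_left)
    have hb : G.degree b ≤ (Ae G s(a, b)).card := by
      rw [← G.card_incidenceFinset_eq_degree b, Ae_eq]
      exact Finset.card_le_card (Finset.subset_union_right)
    have ha' : (G.degree a : ℝ) ≤ ((Ae G s(a, b)).card : ℝ) := by exact_mod_cast ha
    have hb' : (G.degree b : ℝ) ≤ ((Ae G s(a, b)).card : ℝ) := by exact_mod_cast hb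
    linarith
  have hBe_lb : ∀ {a b : Fin N}, G.Adj a b →
      ((Gi2 G a).card : ℝ) + ((Gi2 G b).card : ℝ) ≤ 2 * ((Be G s(a, b)).card : ℝ) := by
    intro a b _
    have ha : (Gi2 G a).card ≤ (Be G s(a, b)).card := by
      rw [Be_eq]; exact Finset.card_le_card (Finset.subset_union_left)
    have hb : (Gi2 G b).card ≤ (Be G s(a, b)).card := by
      rw [Be_eq]; exact Finset.card_le_card (Finset.subset_union_right)
    have ha' : ((Gi2 G a).card : ℝ) ≤ ((Be G s(a, b)).card : ℝ) := by exact_mod_cast ha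
    have hb' : ((Gi2 G b).card : ℝ) ≤ ((Be G s(a, b)).card : ℝ) := by exact_mod_cast hb
    linarith
  -- S vs T
  have hS_ub : ∑ e ∈ G.edgeFinset, ((Ae G e).card : ℝ) * ((Be G e).card : ℝ) ≤ T := by
    rw [hTdef]
    refine Finset.sum_le_sum fun e he => ?_
    induction e using Sym2.ind with
    | _ a b =>
      have hab : G.Adj a b := by rwa [mem_edgeFinset, mem_edgeSet] at he
      rw [hTe hab]
      exact mul_le_mul (hAe_ub hab) (hBe_ub hab) (Nat.cast_nonneg _) (add_nonneg (Nat.cast_nonneg _) (Nat.cast_nonneg _))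
  have hT_le_4S : T ≤ 4 * ∑ e ∈ G.edgeFinset, ((Ae G e).card : ℝ) * ((Be G e).card : ℝ) := by
    rw [hTdef, Finset.mul_sum]
    refine Finset.sum_le_sum fun e he => ?_
    induction e using Sym2.ind with
    | _ a b =>
      have hab : G.Adj a b := by rwa [mem_edgeFinset, mem_edgeSet] at he
      rw [hTe hab]
      have h1 := hAe_lb hab
      have h2 := hBe_lb hab
      have := mul_le_mul h1 h2 (add_nonneg (Nat.cast_nonneg _) (Nat.cast_nonneg _)) (mul_nonneg (by norm_num) (Nat.cast_nonneg _))
      calc ((G.degree a : ℝ) + (G.degree b : ℝ)) * (((Gi2 G a).card : ℝ) + ((Gi2 G b).card : ℝ))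
          ≤ (2 * ((Ae G s(a, b)).card : ℝ)) * (2 * ((Be G s(a, b)).card : ℝ)) := this
        _ = 4 * (((Ae G s(a, b)).card : ℝ) * ((Be G s(a, b)).card : ℝ)) := by ring
  -- evaluation of T as vertex sums
  have hTeval : T = ∑ a, (G.degree a : ℝ) ^ 2 * ((Gi2 G a).card : ℝ)
      + ∑ a, ((∑ b ∈ G.neighborFinset a, G.degree b : ℕ) : ℝ) * ((Gi2 G a).card : ℝ) := by
    rw [hTdef, ← sum_pairs G (fun a b : Fin N => (G.degree a : ℝ) * ((Gi2 G a).card : ℝ) + (G.degree b : ℝ) * ((Gi2 G a).card : ℝ))]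
    rw [← Finset.sum_add_distrib]
    refine Finset.sum_congr rfl fun a _ => ?_
    rw [Finset.sum_add_distrib, Finset.sum_const, ← Finset.sum_mul]
    rw [card_neighborFinset_eq_degree]
    push_cast
    ring
  -- bounds on the cross term
  have hcross_lb : ∑ a, ((Gi2 G a).card : ℝ) ^ 2
      ≤ ∑ a, ((∑ b ∈ G.neighborFinset a, G.degree b : ℕ) : ℝ) * ((Gi2 G a).card : ℝ) := by
    refine Finset.sum_le_sum fun a _ => ?_
    have h := g_le_D G a
    have h' : ((Gi2 G a).card : ℝ) ≤ ((∑ b ∈ G.neighborFinset a, G.degree b : ℕ) : ℝ) := by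
      exact_mod_cast h
    have hg0 : (0:ℝ) ≤ ((Gi2 G a).card : ℝ) := Nat.cast_nonneg _
    rw [pow_two]
    exact mul_le_mul_of_nonneg_right h' hg0
  have hcross_ub : ∑ a, ((∑ b ∈ G.neighborFinset a, G.degree b : ℕ) : ℝ) * ((Gi2 G a).card : ℝ)
      ≤ 2 * ∑ a, ((Gi2 G a).card : ℝ) ^ 2 := by
    rw [Finset.mul_sum]
    refine Finset.sum_le_sum fun a _ => ?_
    have h := D_le_two_g G a
    have h' : ((∑ b ∈ G.neighborFinset a, G.degree b : ℕ) : ℝ) ≤ 2 * ((Gi2 G a).card : ℝ) := by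
      exact_mod_cast h
    have hg0 : (0:ℝ) ≤ ((Gi2 G a).card : ℝ) := Nat.cast_nonneg _
    calc ((∑ b ∈ G.neighborFinset a, G.degree b : ℕ) : ℝ) * ((Gi2 G a).card : ℝ)
        ≤ (2 * ((Gi2 G a).card : ℝ)) * ((Gi2 G a).card : ℝ) := mul_le_mul_of_nonneg_right h' hg0
      _ = 2 * ((Gi2 G a).card : ℝ) ^ 2 := by ring
  have hdg0 : (0:ℝ) ≤ ∑ a, (G.degree a : ℝ) ^ 2 * ((Gi2 G a).card : ℝ) :=
    Finset.sum_nonneg fun a _ => mul_nonneg (sq_nonneg _) (Nat.cast_nonneg _)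
  constructor
  · -- lower bound
    have h1 : ∑ a, (G.degree a : ℝ) ^ 2 * ((Gi2 G a).card : ℝ) + ∑ a, ((Gi2 G a).card : ℝ) ^ 2 ≤ T := by
      rw [hTeval]; linarith
    linarith
  · -- upper bound
    have h2 : T ≤ 2 * (∑ a, (G.degree a : ℝ) ^ 2 * ((Gi2 G a).card : ℝ) + ∑ a, ((Gi2 G a).card : ℝ) ^ 2) := by
      rw [hTeval]; linarith
    linarith
end

section
/- Under the bootstrap null distribution with each node independently in sample X with probability p, the covariance of R_2 (edges with both endpoints outside sample X) and n_X (number of nodes in sample X) is Cov(R_2, n_X) = −2|G| p q^2, where q = 1 − p. -/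
open Finset SimpleGraph

/-- Expectation under the bootstrap null distribution: each of the `N` nodes is
independently assigned to sample X (`σ i = true`) with probability `p`. -/
noncomputable def bootExp (N : ℕ) (p : ℝ) (f : (Fin N → Bool) → ℝ) : ℝ :=
  ∑ σ : Fin N → Bool, (∏ i : Fin N, if σ i then p else 1 - p) * f σ

/-- `R2boot G σ`: number of edges of `G` with both endpoints outside sample X. -/
def R2boot {N : ℕ} (G : SimpleGraph (Fin N)) [DecidableRel G.Adj] (σ : Fin N → Bool) : ℕ :=
  (G.edgeFinset.filter fun e => ∀ v : Fin N, v ∈ e → σ v = false).card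

/-- `nX σ`: number of nodes assigned to sample X. -/
def nX {N : ℕ} (σ : Fin N → Bool) : ℕ :=
  (Finset.univ.filter fun i : Fin N => σ i = true).card

/- ### Auxiliary lemmas -/

lemma bootExp_congr (N : ℕ) (p : ℝ) (f g : (Fin N → Bool) → ℝ)
    (h : ∀ σ, f σ = g σ) : bootExp N p f = bootExp N p g := by
  unfold bootExp; simp_rw [h]

lemma bootExp_zero (N : ℕ) (p : ℝ) : bootExp N p (fun _ => 0) = 0 := by
  simp [bootExp]

lemma bootExp_sum (N : ℕ) (p : ℝ) {ι : Type*} (s : Finset ι)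
    (F : ι → (Fin N → Bool) → ℝ) :
    bootExp N p (fun σ => ∑ x ∈ s, F x σ) = ∑ x ∈ s, bootExp N p (F x) := by
  unfold bootExp
  simp_rw [Finset.mul_sum]
  exact Finset.sum_comm

lemma sum_prod_bool (N : ℕ) (f : Fin N → Bool → ℝ) :
    ∑ σ : Fin N → Bool, ∏ i, f i (σ i) = ∏ i, (f i true + f i false) := by
  rw [← Fintype.piFinset_univ, ← Finset.prod_univ_sum]
  simp

lemma bootExp_prod (N : ℕ) (p : ℝ) (g : Fin N → Bool → ℝ) :
    bootExp N p (fun σ => ∏ i, g i (σ i)) =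
      ∏ i, (p * g i true + (1 - p) * g i false) := by
  unfold bootExp
  have h : ∀ σ : Fin N → Bool,
      (∏ i, if σ i then p else 1 - p) * ∏ i, g i (σ i)
        = ∏ i, ((if σ i then p else 1 - p) * g i (σ i)) := fun σ =>
    (Finset.prod_mul_distrib).symm
  simp_rw [h]
  exact (sum_prod_bool N fun i b => (if b then p else 1 - p) * g i b).trans (by simp)

/-- Expectation of the indicator that all of `S` is `false` and all of `T` is `true`. -/
lemma bootExp_indicator (N : ℕ) (p : ℝ) (S T : Finset (Fin N)) (hST : Disjoint S T) :
    bootExp N p (fun σ =>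
        if (∀ i ∈ S, σ i = false) ∧ (∀ i ∈ T, σ i = true) then (1 : ℝ) else 0) =
      (1 - p) ^ S.card * p ^ T.card := by
  have key : ∀ σ : Fin N → Bool,
      (if (∀ i ∈ S, σ i = false) ∧ (∀ i ∈ T, σ i = true) then (1 : ℝ) else 0)
        = ∏ i, (fun (i : Fin N) (b : Bool) =>
            (if i ∈ S then (if b then (0:ℝ) else 1)
              else if i ∈ T then (if b then 1 else 0) else 1)) i (σ i) := by
    intro σ
    by_cases h : (∀ i ∈ S, σ i = false) ∧ (∀ i ∈ T, σ i = true)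
    · rw [if_pos h]
      symm
      apply Finset.prod_eq_one
      intro i _
      by_cases hiS : i ∈ S
      · simp [hiS, h.1 i hiS]
      · by_cases hiT : i ∈ T
        · simp [hiS, hiT, h.2 i hiT]
        · simp [hiS, hiT]
    · rw [if_neg h]
      symm
      push_neg at h
      by_cases h1 : ∀ i ∈ S, σ i = false
      · obtain ⟨j, hjT, hj⟩ := h h1
        have hjS : j ∉ S := Finset.disjoint_right.mp hST hjT
        apply Finset.prod_eq_zero (Finset.mem_univ j)
        simp [hjS, hjT, show σ j = false by simpa using hj]
      · push_neg at h1
        obtain ⟨j, hjS, hj⟩ := h1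
        apply Finset.prod_eq_zero (Finset.mem_univ j)
        simp [hjS, show σ j = true by simpa using hj]
  rw [bootExp_congr _ _ _ _ key, bootExp_prod N p (fun (i : Fin N) (b : Bool) =>
    (if i ∈ S then (if b then (0:ℝ) else 1)
      else if i ∈ T then (if b then 1 else 0) else 1))]
  simp only []
  trans ∏ i : Fin N, ((if i ∈ S then 1 - p else 1) * (if i ∈ T then p else 1))
  · refine Finset.prod_congr rfl fun i _ => ?_
    by_cases hiS : i ∈ S
    · have hiT : i ∉ T := Finset.disjoint_left.mp hST hiS
      simp [hiS, hiT]
    · by_cases hiT : i ∈ T <;> simp [hiS, hiT]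
  · rw [Finset.prod_mul_distrib, Finset.prod_ite_mem, Finset.prod_ite_mem,
      Finset.univ_inter, Finset.univ_inter, Finset.prod_const, Finset.prod_const]

/- ### Indicator decompositions -/

lemma R2boot_eq_sum {N : ℕ} (G : SimpleGraph (Fin N)) [DecidableRel G.Adj]
    (σ : Fin N → Bool) :
    (R2boot G σ : ℝ) =
      ∑ e ∈ G.edgeFinset, if (∀ v : Fin N, v ∈ e → σ v = false) then (1:ℝ) else 0 := by
  rw [R2boot, Finset.card_filter]
  push_cast
  rfl

lemma nX_eq_sum {N : ℕ} (σ : Fin N → Bool) :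
    (nX σ : ℝ) = ∑ i : Fin N, if σ i = true then (1:ℝ) else 0 := by
  rw [nX, Finset.card_filter]
  push_cast
  rfl

/-- under the bootstrap null distribution,
`Cov(R_2, n_X) = -2 |G| p q²` with `q = 1 - p`. -/
theorem boot_cov_R2_nX (N : ℕ) (G : SimpleGraph (Fin N)) [DecidableRel G.Adj]
    (p : ℝ) (hp0 : 0 ≤ p) (hp1 : p ≤ 1) :
    bootExp N p (fun σ => (R2boot G σ : ℝ) * (nX σ : ℝ)) -
        bootExp N p (fun σ => (R2boot G σ : ℝ)) * bootExp N p (fun σ => (nX σ : ℝ)) =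
      -(2 * (G.edgeFinset.card : ℝ) * p * (1 - p) ^ 2) := by
  classical
  -- expectation of a node indicator
  have hEnode : ∀ j : Fin N,
      bootExp N p (fun σ => if σ j = true then (1:ℝ) else 0) = p := by
    intro j
    have h0 := bootExp_indicator N p ∅ {j} (by simp)
    simp only [Finset.card_empty, Finset.card_singleton, pow_zero, pow_one,
      one_mul] at h0
    refine (bootExp_congr N p _ _ ?_).trans h0
    intro σ
    congr 1
    simp
  -- expectation of an edge indicator
  have hEedge : ∀ e ∈ G.edgeFinset,
      bootExp N p (fun σ => if (∀ v : Fin N, v ∈ e → σ v = false) then (1:ℝ) else 0)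
        = (1 - p) ^ 2 := by
    intro e he
    induction e using Sym2.ind with
    | _ a b =>
      have hab : a ≠ b := by
        rw [SimpleGraph.mem_edgeFinset] at he
        exact ((SimpleGraph.mem_edgeSet G).mp he).ne
      have h0 := bootExp_indicator N p {a, b} ∅ (by simp)
      rw [Finset.card_pair hab] at h0
      simp only [Finset.card_empty, pow_zero, mul_one] at h0
      refine (bootExp_congr N p _ _ ?_).trans h0
      intro σ
      congr 1
      simp only [eq_iff_iff, Finset.mem_insert, Finset.mem_singleton]
      constructor
      · intro h
        refine ⟨fun i hi => ?_, by simp⟩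
        rcases hi with rfl | rfl <;> exact h _ (by simp)
      · rintro ⟨h, -⟩ v hv
        rw [Sym2.mem_iff] at hv
        exact h v (by tauto)
  -- joint expectation
  have hEjoint : ∀ e ∈ G.edgeFinset, ∀ j : Fin N,
      bootExp N p (fun σ =>
          (if (∀ v : Fin N, v ∈ e → σ v = false) then (1:ℝ) else 0) *
          (if σ j = true then (1:ℝ) else 0))
        = if j ∈ e then 0 else (1 - p) ^ 2 * p := by
    intro e he j
    induction e using Sym2.ind with
    | _ a b =>
      have hab : a ≠ b := by
        rw [SimpleGraph.mem_edgeFinset] at he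
        exact ((SimpleGraph.mem_edgeSet G).mp he).ne
      by_cases hj : j ∈ s(a, b)
      · rw [if_pos hj]
        refine (bootExp_congr N p _ _ ?_).trans (bootExp_zero N p)
        intro σ
        by_cases hσ : ∀ v : Fin N, v ∈ s(a,b) → σ v = false
        · rw [if_pos hσ, hσ j hj]
          simp
        · rw [if_neg hσ, zero_mul]
      · rw [if_neg hj]
        rw [Sym2.mem_iff] at hj
        push_neg at hj
        have hdisj : Disjoint ({a, b} : Finset (Fin N)) {j} := by
          simp only [Finset.disjoint_singleton_right, Finset.mem_insert,
            Finset.mem_singleton]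
          tauto
        have h0 := bootExp_indicator N p {a, b} {j} hdisj
        rw [Finset.card_pair hab, Finset.card_singleton, pow_one] at h0
        refine (bootExp_congr N p _ _ ?_).trans h0
        intro σ
        rw [ite_zero_mul_ite_zero, one_mul]
        congr 1
        simp only [eq_iff_iff, Finset.mem_insert, Finset.mem_singleton]
        constructor
        · rintro ⟨h, hjt⟩
          refine ⟨fun i hi => ?_, fun i hi => by rw [hi]; exact hjt⟩
          rcases hi with rfl | rfl <;> exact h _ (by simp)
        · rintro ⟨h, ht⟩
          refine ⟨fun v hv => ?_, ht j rfl⟩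
          rw [Sym2.mem_iff] at hv
          exact h v (by tauto)
  -- decompose everything
  have hnX : bootExp N p (fun σ => (nX σ : ℝ)) = ∑ j : Fin N, p := by
    rw [bootExp_congr N p _ _ (fun σ => nX_eq_sum σ), bootExp_sum]
    exact Finset.sum_congr rfl fun j _ => hEnode j
  have hR2 : bootExp N p (fun σ => (R2boot G σ : ℝ)) =
      ∑ e ∈ G.edgeFinset, (1 - p) ^ 2 := by
    rw [bootExp_congr N p _ _ (fun σ => R2boot_eq_sum G σ), bootExp_sum]
    exact Finset.sum_congr rfl hEedge
  have hprod : bootExp N p (fun σ => (R2boot G σ : ℝ) * (nX σ : ℝ)) =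
      ∑ e ∈ G.edgeFinset, ∑ j : Fin N, (if j ∈ e then (0:ℝ) else (1 - p) ^ 2 * p) := by
    have hdec : ∀ σ : Fin N → Bool, (R2boot G σ : ℝ) * (nX σ : ℝ) =
        ∑ e ∈ G.edgeFinset, ∑ j : Fin N,
          (if (∀ v : Fin N, v ∈ e → σ v = false) then (1:ℝ) else 0) *
          (if σ j = true then (1:ℝ) else 0) := by
      intro σ
      rw [R2boot_eq_sum, nX_eq_sum, Finset.sum_mul_sum]
    rw [bootExp_congr N p _ _ hdec, bootExp_sum]
    refine Finset.sum_congr rfl fun e he => ?_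
    rw [bootExp_sum]
    exact Finset.sum_congr rfl fun j _ => hEjoint e he j
  -- inner sum over nodes, per edge
  have hin : ∀ e ∈ G.edgeFinset,
      (∑ j : Fin N, if j ∈ e then (0:ℝ) else (1 - p) ^ 2 * p)
        = (N : ℝ) * ((1 - p) ^ 2 * p) - 2 * ((1 - p) ^ 2 * p) := by
    intro e he
    induction e using Sym2.ind with
    | _ a b =>
      have hab : a ≠ b := by
        rw [SimpleGraph.mem_edgeFinset] at he
        exact ((SimpleGraph.mem_edgeSet G).mp he).ne
      have hcount : (Finset.univ.filter fun j : Fin N => j ∈ s(a,b)).card = 2 := by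
        have h1 : (Finset.univ.filter fun j : Fin N => j ∈ s(a,b)) = {a, b} := by
          ext j; simp [Sym2.mem_iff]
        rw [h1, Finset.card_pair hab]
      have h2N : 2 ≤ N := by
        have := Finset.card_filter_le Finset.univ (fun j : Fin N => j ∈ s(a,b))
        rw [hcount, Finset.card_univ, Fintype.card_fin] at this
        exact this
      have hneg : (Finset.univ.filter fun j : Fin N => ¬ j ∈ s(a,b)).card = N - 2 := by
        have := Finset.card_filter_add_card_filter_not
          (s := (Finset.univ : Finset (Fin N))) (p := fun j : Fin N => j ∈ s(a,b))
        rw [hcount, Finset.card_univ, Fintype.card_fin] at this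
        omega
      rw [Finset.sum_ite, Finset.sum_const, Finset.sum_const, hneg, smul_zero,
        zero_add, nsmul_eq_mul, Nat.cast_sub h2N]
      push_cast
      ring
  rw [hprod, hR2, hnX, Finset.sum_congr rfl hin]
  simp only [Finset.sum_const, nsmul_eq_mul, Finset.card_univ, Fintype.card_fin]
  ring
end

section
/- Under the bootstrap null distribution with node labels independently 1 with probability p and 2 with probability q = 1−p, the variance of R_δ = R_1 − R_2 equals pq ∑_{i=1}^N |G_i|^2. -/
open Finset SimpleGraph

/-- `R1boot G σ`: number of edges of `G` with both endpoints in sample X. -/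
def R1boot {N : ℕ} (G : SimpleGraph (Fin N)) [DecidableRel G.Adj] (σ : Fin N → Bool) : ℕ :=
  (G.edgeFinset.filter fun e => ∀ v : Fin N, v ∈ e → σ v = true).card

namespace BootAux

/-- Indicator (as a real number) of node `i` being in sample X. -/
def X {N : ℕ} (σ : Fin N → Bool) (i : Fin N) : ℝ := if σ i then 1 else 0

lemma bootExp_prod {N : ℕ} (p : ℝ) (T : Finset (Fin N)) :
    bootExp N p (fun σ => ∏ i ∈ T, X σ i) = p ^ T.card := by
  unfold bootExp
  have h1 : ∀ σ : Fin N → Bool,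
      (∏ i : Fin N, if σ i then p else 1 - p) * ∏ i ∈ T, X σ i
        = ∏ i : Fin N,
            ((fun b => (if b then p else 1 - p) * (if i ∈ T then (if b then (1:ℝ) else 0) else 1))
              (σ i)) := by
    intro σ
    simp only
    rw [Finset.prod_mul_distrib]
    congr 1
    rw [← Finset.prod_filter, Finset.filter_univ_mem]
    rfl
  simp_rw [h1]
  rw [← Fintype.prod_sum
    (fun (i : Fin N) (b : Bool) =>
      (if b then p else 1 - p) * (if i ∈ T then (if b then (1:ℝ) else 0) else 1))]
  have h2 : ∀ i : Fin N,
      (∑ b : Bool, (if b then p else 1 - p) * (if i ∈ T then (if b then (1:ℝ) else 0) else 1))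
        = if i ∈ T then p else 1 := by
    intro i
    by_cases hi : i ∈ T <;> simp [hi]
  simp_rw [h2]
  rw [← Finset.prod_filter, Finset.filter_univ_mem, Finset.prod_const]

lemma mass {N : ℕ} (p : ℝ) :
    ∑ σ : Fin N → Bool, (∏ i : Fin N, if σ i then p else 1 - p) = 1 := by
  have := bootExp_prod p (∅ : Finset (Fin N))
  simpa [bootExp] using this

lemma bootExp_sum {N : ℕ} (p : ℝ) {κ : Type*} (s : Finset κ)
    (f : κ → (Fin N → Bool) → ℝ) :
    bootExp N p (fun σ => ∑ k ∈ s, f k σ) = ∑ k ∈ s, bootExp N p (f k) := by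
  unfold bootExp
  rw [Finset.sum_comm]
  simp_rw [Finset.mul_sum]

lemma bootExp_comb {N : ℕ} (p : ℝ) (f h : (Fin N → Bool) → ℝ) (a b k : ℝ) :
    bootExp N p (fun σ => a * f σ + b * h σ + k) =
      a * bootExp N p f + b * bootExp N p h + k := by
  unfold bootExp
  have h1 : ∀ σ : Fin N → Bool,
      (∏ i : Fin N, if σ i then p else 1 - p) * (a * f σ + b * h σ + k)
        = a * ((∏ i : Fin N, if σ i then p else 1 - p) * f σ)
          + b * ((∏ i : Fin N, if σ i then p else 1 - p) * h σ)
          + (∏ i : Fin N, if σ i then p else 1 - p) * k := by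
    intro σ; ring
  simp_rw [h1]
  rw [Finset.sum_add_distrib, Finset.sum_add_distrib, ← Finset.mul_sum, ← Finset.mul_sum,
    ← Finset.sum_mul, mass, one_mul]

lemma bootExp_const_mul {N : ℕ} (p : ℝ) (f : (Fin N → Bool) → ℝ) (a : ℝ) :
    bootExp N p (fun σ => a * f σ) = a * bootExp N p f := by
  unfold bootExp
  rw [Finset.mul_sum]
  apply Finset.sum_congr rfl; intro σ _; ring

lemma bootExp_X {N : ℕ} (p : ℝ) (i : Fin N) :
    bootExp N p (fun σ => X σ i) = p := by
  have := bootExp_prod p ({i} : Finset (Fin N))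
  simpa using this

lemma bootExp_XX {N : ℕ} (p : ℝ) (i j : Fin N) :
    bootExp N p (fun σ => X σ i * X σ j) = if i = j then p else p ^ 2 := by
  by_cases hij : i = j
  · subst hij
    have hXX : ∀ σ : Fin N → Bool, X σ i * X σ i = X σ i := by
      intro σ; unfold X; by_cases h : σ i <;> simp [h]
    simp_rw [hXX]
    simp [bootExp_X p i]
  · have := bootExp_prod p ({i, j} : Finset (Fin N))
    simp only [Finset.prod_pair hij, Finset.card_pair hij] at this
    simpa [hij] using this

variable {N : ℕ} (G : SimpleGraph (Fin N)) [DecidableRel G.Adj]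

lemma sum_dart_fst (f : Fin N → ℝ) :
    ∑ d : G.Dart, f d.fst = ∑ v : Fin N, (G.degree v : ℝ) * f v := by
  classical
  rw [← Finset.sum_fiberwise_of_maps_to (t := (univ : Finset (Fin N)))
      (g := fun d : G.Dart => d.fst) (fun d _ => Finset.mem_univ _) (fun d => f d.fst)]
  apply Finset.sum_congr rfl
  intro v _
  rw [Finset.sum_congr rfl (fun d hd => by rw [(Finset.mem_filter.mp hd).2] :
        ∀ d ∈ Finset.univ.filter (fun d : G.Dart => d.fst = v), f d.fst = f v),
    Finset.sum_const, nsmul_eq_mul]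
  congr 1
  exact_mod_cast G.dart_fst_fiber_card_eq_degree v

lemma sum_dart_snd (f : Fin N → ℝ) :
    ∑ d : G.Dart, f d.snd = ∑ d : G.Dart, f d.fst := by
  apply Fintype.sum_equiv (Function.Involutive.toPerm _ SimpleGraph.Dart.symm_involutive)
  intro d
  rfl

lemma sum_dart_edge (ψ : Sym2 (Fin N) → ℝ) :
    ∑ d : G.Dart, ψ d.edge = ∑ e ∈ G.edgeFinset, 2 * ψ e := by
  classical
  rw [← Finset.sum_fiberwise_of_maps_to (t := G.edgeFinset)
      (g := fun d : G.Dart => d.edge)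
      (fun d _ => (SimpleGraph.mem_edgeFinset).mpr d.edge_mem) (fun d => ψ d.edge)]
  apply Finset.sum_congr rfl
  intro e he
  rw [Finset.sum_congr rfl (fun d hd => by rw [(Finset.mem_filter.mp hd).2] :
        ∀ d ∈ Finset.univ.filter (fun d : G.Dart => d.edge = e), ψ d.edge = ψ e),
    Finset.sum_const, nsmul_eq_mul]
  congr 1
  have := G.dart_edge_fiber_card e ((SimpleGraph.mem_edgeFinset).mp he)
  exact_mod_cast this

/-- Weighted handshake lemma: summing `f u + f v` over the edges `{u, v}` of `G`
gives the degree-weighted sum of `f`. -/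
lemma weighted_handshake (f : Fin N → ℝ) :
    ∑ e ∈ G.edgeFinset,
        Sym2.lift ⟨fun u v => f u + f v, fun _ _ => add_comm _ _⟩ e
      = ∑ v : Fin N, (G.degree v : ℝ) * f v := by
  have hd : ∀ d : G.Dart,
      Sym2.lift ⟨fun u v => f u + f v, fun _ _ => add_comm _ _⟩ d.edge
        = f d.fst + f d.snd := fun d => Sym2.lift_mk _ _ _
  have h1 := sum_dart_edge G (Sym2.lift ⟨fun u v => f u + f v, fun _ _ => add_comm _ _⟩)
  simp_rw [hd, Finset.sum_add_distrib, sum_dart_snd G f, sum_dart_fst G f] at h1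
  have h2 : ∑ e ∈ G.edgeFinset,
      2 * Sym2.lift ⟨fun u v => f u + f v, fun _ _ => add_comm _ _⟩ e
        = 2 * ∑ e ∈ G.edgeFinset,
            Sym2.lift ⟨fun u v => f u + f v, fun _ _ => add_comm _ _⟩ e := by
    rw [Finset.mul_sum]
  rw [h2] at h1
  linarith

set_option linter.unreachableTactic false in
set_option linter.unusedTactic false in
/-- Pointwise decomposition: `R₁ - R₂ = ∑ v, deg v · X v - |E|`. -/
lemma pointwise (σ : Fin N → Bool) :
    (R1boot G σ : ℝ) - (R2boot G σ : ℝ)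
      = (∑ v : Fin N, (G.degree v : ℝ) * X σ v) - (G.edgeFinset.card : ℝ) := by
  classical
  have h1 : (R1boot G σ : ℝ)
      = ∑ e ∈ G.edgeFinset, (if (∀ v : Fin N, v ∈ e → σ v = true) then (1:ℝ) else 0) := by
    rw [R1boot, Finset.card_filter]
    push_cast
    rfl
  have h2 : (R2boot G σ : ℝ)
      = ∑ e ∈ G.edgeFinset, (if (∀ v : Fin N, v ∈ e → σ v = false) then (1:ℝ) else 0) := by
    rw [R2boot, Finset.card_filter]
    push_cast
    rfl
  have hc : (G.edgeFinset.card : ℝ) = ∑ _e ∈ G.edgeFinset, (1:ℝ) := by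
    rw [Finset.sum_const, nsmul_eq_mul, mul_one]
  rw [h1, h2, ← Finset.sum_sub_distrib,
    ← weighted_handshake G (X σ), hc, ← Finset.sum_sub_distrib]
  apply Finset.sum_congr rfl
  intro e _
  induction e with
  | _ u v =>
    rw [Sym2.lift_mk]
    simp only [Sym2.mem_iff]
    cases hu : σ u <;> cases hv : σ v <;>
      simp [X, hu, hv] <;> intro w hw <;> rcases hw with h | h <;> simp [h, hu, hv]

lemma exp_g (p : ℝ) (d : Fin N → ℝ) :
    bootExp N p (fun σ => ∑ v : Fin N, d v * X σ v) = p * ∑ v : Fin N, d v := by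
  rw [bootExp_sum]
  rw [Finset.sum_congr rfl (fun v _ => by
    rw [bootExp_const_mul, bootExp_X] :
    ∀ v ∈ (univ : Finset (Fin N)), bootExp N p (fun σ => d v * X σ v) = d v * p)]
  rw [← Finset.sum_mul, mul_comm]

set_option linter.unnecessarySeqFocus false in
lemma exp_gg (p : ℝ) (d : Fin N → ℝ) :
    bootExp N p (fun σ => (∑ v : Fin N, d v * X σ v) * (∑ v : Fin N, d v * X σ v))
      = p ^ 2 * (∑ v : Fin N, d v) ^ 2 + (p - p ^ 2) * ∑ v : Fin N, d v ^ 2 := by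
  have hexp : ∀ σ : Fin N → Bool,
      (∑ v : Fin N, d v * X σ v) * (∑ v : Fin N, d v * X σ v)
        = ∑ i : Fin N, ∑ j : Fin N, (d i * d j) * (X σ i * X σ j) := by
    intro σ
    rw [Finset.sum_mul_sum]
    exact Finset.sum_congr rfl fun i _ => Finset.sum_congr rfl fun j _ => by ring
  simp_rw [hexp]
  rw [bootExp_sum]
  rw [Finset.sum_congr rfl (fun i _ => by
      rw [bootExp_sum]
      exact Finset.sum_congr rfl fun j _ => by
        rw [bootExp_const_mul, bootExp_XX] :
    ∀ i ∈ (univ : Finset (Fin N)),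
      bootExp N p (fun σ => ∑ j : Fin N, (d i * d j) * (X σ i * X σ j))
        = ∑ j : Fin N, d i * d j * (if i = j then p else p ^ 2))]
  have hsplit : ∀ i j : Fin N,
      d i * d j * (if i = j then p else p ^ 2)
        = d i * d j * p ^ 2 + (if i = j then d i * d j * (p - p ^ 2) else 0) := by
    intro i j
    by_cases h : i = j <;> simp [h] <;> ring
  simp_rw [hsplit, Finset.sum_add_distrib, Finset.sum_ite_eq]
  simp only [Finset.mem_univ, if_true]
  have h1 : ∑ i : Fin N, ∑ j : Fin N, d i * d j * p ^ 2
      = p ^ 2 * (∑ v : Fin N, d v) ^ 2 := by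
    rw [sq (∑ v : Fin N, d v), Finset.sum_mul_sum, Finset.mul_sum]
    exact Finset.sum_congr rfl fun i _ => by
      rw [Finset.mul_sum]; exact Finset.sum_congr rfl fun j _ => by ring
  rw [h1]
  congr 1
  rw [Finset.mul_sum]
  exact Finset.sum_congr rfl fun i _ => by ring

end BootAux

open BootAux in
/-- under the bootstrap null distribution,
`Var(R_δ) = Var(R_1 - R_2) = p q ∑_i |G_i|²` with `q = 1 - p`. -/
theorem boot_var_Rdiff (N : ℕ) (G : SimpleGraph (Fin N)) [DecidableRel G.Adj]
    (p : ℝ) (hp0 : 0 ≤ p) (hp1 : p ≤ 1) :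
    bootExp N p (fun σ => ((R1boot G σ : ℝ) - (R2boot G σ : ℝ)) ^ 2) -
        (bootExp N p (fun σ => (R1boot G σ : ℝ) - (R2boot G σ : ℝ))) ^ 2 =
      p * (1 - p) * ∑ i : Fin N, (G.degree i : ℝ) ^ 2 := by
  classical
  set c : ℝ := (G.edgeFinset.card : ℝ) with hc
  set g : (Fin N → Bool) → ℝ := fun σ => ∑ v : Fin N, (G.degree v : ℝ) * X σ v with hg
  have hpt : ∀ σ : Fin N → Bool, (R1boot G σ : ℝ) - (R2boot G σ : ℝ) = g σ - c :=
    fun σ => pointwise G σ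
  have h1 : bootExp N p (fun σ => ((R1boot G σ : ℝ) - (R2boot G σ : ℝ)) ^ 2)
      = bootExp N p (fun σ => 1 * (g σ * g σ) + (-(2 * c)) * g σ + c ^ 2) := by
    congr 1; funext σ; rw [hpt σ]; ring
  have h2 : bootExp N p (fun σ => (R1boot G σ : ℝ) - (R2boot G σ : ℝ))
      = bootExp N p (fun σ => 1 * g σ + 0 * g σ + (-c)) := by
    congr 1; funext σ; rw [hpt σ]; ring
  rw [h1, h2, bootExp_comb, bootExp_comb]
  rw [hg, exp_g, exp_gg]
  ring
end
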